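/- Let c ≥ 1, C > 0 and δ ≥ 0 be real numbers, and let (X_k)_{k ≥ 1} be a sequence of nonnegative real numbers satisfying X_k ≤ max( C, (c · 2^{δ k})^{1/2^k} · X_{k−1} ) for every k ≥ 2. Then for every k ≥ 1, X_k ≤ c · 4^δ · max(C, X₁); in particular the sequence (X_k) is bounded, with sup_k X_k ≤ c · 4^δ · max(C, X₁). -/
import Mathlib


open Real

private lemma ams_s_eq (k : ℕ) (hk : 1 ≤ k) :
    ∑ i ∈ Finset.Icc 2 k, (1 : ℝ) / 2 ^ i = 1 / 2 - 1 / 2 ^ k := by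
  induction k with
  | zero => omega
  | succ n ih =>
    rcases Nat.lt_or_ge n 1 with h | h
    · interval_cases n
      norm_num
    · rw [Finset.sum_Icc_succ_top (by omega), ih h]
      have : (2 : ℝ) ^ (n + 1) = 2 * 2 ^ n := by ring
      field_simp
      ring

private lemma ams_t_le (k : ℕ) :
    ∑ i ∈ Finset.Icc 2 k, (i : ℝ) / 2 ^ i ≤ 2 - (k + 2) / 2 ^ k := by
  induction k with
  | zero => simp
  | succ n ih =>
    rcases Nat.lt_or_ge n 1 with h | h
    · interval_cases n
      · norm_num
    · rw [Finset.sum_Icc_succ_top (by omega)]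
      push_cast
      have hEq : ((n : ℝ) + 1) / 2 ^ (n + 1) =
          ((n : ℝ) + 2) / 2 ^ n - ((n : ℝ) + 1 + 2) / 2 ^ (n + 1) := by
        rw [pow_succ]
        field_simp
        ring
      linarith [ih, hEq]

theorem alikakos_moser_iteration
    (c C δ : ℝ) (hc : 1 ≤ c) (hC : 0 < C) (hδ : 0 ≤ δ)
    (X : ℕ → ℝ) (hXnonneg : ∀ k, 0 ≤ X k)
    (hrec : ∀ k : ℕ, 2 ≤ k →
      X k ≤ max C ((c * (2 : ℝ) ^ (δ * k)) ^ ((1 : ℝ) / 2 ^ k) * X (k - 1))) :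
    ∀ k : ℕ, 1 ≤ k → X k ≤ c * (4 : ℝ) ^ δ * max C (X 1) := by
  set M := max C (X 1) with hM
  have hM0 : 0 < M := lt_of_lt_of_le hC (le_max_left _ _)
  have hc0 : (0 : ℝ) < c := lt_of_lt_of_le one_pos hc
  set s : ℕ → ℝ := fun k => ∑ i ∈ Finset.Icc 2 k, (1 : ℝ) / 2 ^ i with hs
  set t : ℕ → ℝ := fun k => ∑ i ∈ Finset.Icc 2 k, (i : ℝ) / 2 ^ i with ht
  have hs0 : ∀ k, 0 ≤ s k := fun k => Finset.sum_nonneg (fun i _ => by positivity)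
  have ht0 : ∀ k, 0 ≤ t k := fun k => Finset.sum_nonneg (fun i _ => by positivity)
  have hf1 : ∀ k, 1 ≤ c ^ s k * (2 : ℝ) ^ (δ * t k) := by
    intro k
    have h1 : (1 : ℝ) ≤ c ^ s k := Real.one_le_rpow hc (hs0 k)
    have h2 : (1 : ℝ) ≤ (2 : ℝ) ^ (δ * t k) :=
      Real.one_le_rpow (by norm_num) (mul_nonneg hδ (ht0 k))
    nlinarith
  have key : ∀ k, 1 ≤ k → X k ≤ c ^ s k * (2 : ℝ) ^ (δ * t k) * M := by
    intro k hk
    induction k, hk using Nat.le_induction with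
    | base =>
      have : s 1 = 0 := by simp [hs, Finset.Icc_eq_empty_of_lt]
      have ht1 : t 1 = 0 := by simp [ht, Finset.Icc_eq_empty_of_lt]
      rw [this, ht1]
      simp [hM]
    | succ n hn ih =>
      have hrec' := hrec (n + 1) (by omega)
      simp only [Nat.add_sub_cancel] at hrec'
      have ha0 : 0 ≤ (c * (2 : ℝ) ^ (δ * (n + 1 : ℕ))) ^ ((1 : ℝ) / 2 ^ (n + 1)) := by
        positivity
      have hprod : (c * (2 : ℝ) ^ (δ * (n + 1 : ℕ))) ^ ((1 : ℝ) / 2 ^ (n + 1)) *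
          (c ^ s n * (2 : ℝ) ^ (δ * t n)) = c ^ s (n + 1) * (2 : ℝ) ^ (δ * t (n + 1)) := by
        rw [Real.mul_rpow hc0.le (Real.rpow_nonneg (by norm_num) _),
          ← Real.rpow_mul (by norm_num : (0:ℝ) ≤ 2)]
        have hsrec : s (n + 1) = s n + (1 : ℝ) / 2 ^ (n + 1) := by
          simp only [hs]
          rw [Finset.sum_Icc_succ_top (by omega)]
        have htrec : δ * t (n + 1) = δ * t n + δ * (n + 1 : ℕ) * ((1 : ℝ) / 2 ^ (n + 1)) := by
          simp only [ht]
          rw [Finset.sum_Icc_succ_top (by omega)]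
          push_cast
          ring
        rw [hsrec, htrec, Real.rpow_add hc0, Real.rpow_add (by norm_num : (0:ℝ) < 2)]
        ring
      refine hrec'.trans (max_le ?_ ?_)
      · calc C ≤ M := le_max_left _ _
          _ = 1 * M := (one_mul M).symm
          _ ≤ c ^ s (n + 1) * (2 : ℝ) ^ (δ * t (n + 1)) * M := by
              exact mul_le_mul_of_nonneg_right (hf1 (n + 1)) hM0.le
      · calc _ ≤ (c * (2 : ℝ) ^ (δ * (n + 1 : ℕ))) ^ ((1 : ℝ) / 2 ^ (n + 1)) *
              (c ^ s n * (2 : ℝ) ^ (δ * t n) * M) :=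
              mul_le_mul_of_nonneg_left ih ha0
          _ = c ^ s (n + 1) * (2 : ℝ) ^ (δ * t (n + 1)) * M := by rw [← hprod]; ring
  intro k hk
  refine (key k hk).trans ?_
  have hsle : s k ≤ 1 := by
    rw [hs]
    simp only
    rw [ams_s_eq k hk]
    have : (0:ℝ) < 1 / 2 ^ k := by positivity
    linarith
  have htle : t k ≤ 2 := by
    have := ams_t_le k
    have h2 : (0:ℝ) ≤ ((k : ℝ) + 2) / 2 ^ k := by positivity
    simp only [ht]
    linarith
  have h1 : c ^ s k ≤ c := by
    calc c ^ s k ≤ c ^ (1 : ℝ) := Real.rpow_le_rpow_of_exponent_le hc hsle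
      _ = c := Real.rpow_one c
  have h2 : (2 : ℝ) ^ (δ * t k) ≤ (4 : ℝ) ^ δ := by
    have h4 : (4 : ℝ) ^ δ = (2 : ℝ) ^ (2 * δ) := by
      rw [show (4 : ℝ) = (2 : ℝ) ^ (2 : ℝ) by
        rw [show (2:ℝ) = ((2:ℕ):ℝ) by norm_num, Real.rpow_natCast]; norm_num,
        ← Real.rpow_mul (by norm_num : (0:ℝ) ≤ 2)]
    rw [h4]
    exact Real.rpow_le_rpow_of_exponent_le (by norm_num) (by nlinarith)
  have := mul_le_mul h1 h2 (Real.rpow_nonneg (by norm_num) _) hc0.le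
  exact mul_le_mul_of_nonneg_right this hM0.le
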